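/- Let U = Σ_{r,s=0}^{d−1} |r,s⟩⟨Ω_{r,s}| be the Bell unitary, F = (1/√d) Σ_{x,y=0}^{d−1} ω^{−xy} |x⟩⟨y| the discrete Fourier matrix, and 𝔽 = Σ_{r,s=0}^{d−1} |r,s⟩⟨s,r| the flip (swap) operator on ℂ^d ⊗ ℂ^d. Then U^† 𝔽 U = (F^† ⊗ F) 𝔽. In particular, since (F^† ⊗ F) is a local unitary and 𝔽 maps product vectors to product vectors, conjugation of a vector by U^† 𝔽 U preserves its Schmidt rank. -/

import Mathlib

open Matrix BigOperators Complex Kronecker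
open scoped ComplexOrder

/-- `ω = exp(2πi/d)`. -/
noncomputable def omg (d : ℕ) : ℂ := Complex.exp (2 * Real.pi * Complex.I / (d : ℂ))

/-- `ω^x` for `x : ZMod d`. -/
noncomputable def wpow (d : ℕ) [NeZero d] (x : ZMod d) : ℂ := omg d ^ x.val

/-- Weyl-Heisenberg operator `W_{k,l} = Σ_j ω^{jk} |j⟩⟨j+l|`. -/
noncomputable def Weyl (d : ℕ) [NeZero d] (k l : ZMod d) : Matrix (ZMod d) (ZMod d) ℂ :=
  Matrix.of fun i j => if j = i + l then wpow d (i * k) else 0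

/-- Bell basis vector `|Ω_{k,l}⟩ = (W_{k,l} ⊗ 1)|Ω_{0,0}⟩`, whose `(i,j)` entry is
`(1/√d) (W_{k,l})_{i,j}`. -/
noncomputable def OmegaVec (d : ℕ) [NeZero d] (k l : ZMod d) : ZMod d × ZMod d → ℂ :=
  fun p => ((1 / Real.sqrt d : ℝ) : ℂ) * Weyl d k l p.1 p.2

/-- Bell projector `P_{k,l} = |Ω_{k,l}⟩⟨Ω_{k,l}|`. -/
noncomputable def BellProj (d : ℕ) [NeZero d] (k l : ZMod d) :
    Matrix (ZMod d × ZMod d) (ZMod d × ZMod d) ℂ :=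
  Matrix.of fun p q => OmegaVec d k l p * (starRingEnd ℂ) (OmegaVec d k l q)

/-- Bell unitary `U = Σ_{r,s} |r,s⟩⟨Ω_{r,s}|`. -/
noncomputable def BellU (d : ℕ) [NeZero d] :
    Matrix (ZMod d × ZMod d) (ZMod d × ZMod d) ℂ :=
  Matrix.of fun p q => (starRingEnd ℂ) (OmegaVec d p.1 p.2 q)

/-- Discrete Fourier matrix `F = (1/√d) Σ_{x,y} ω^{-xy} |x⟩⟨y|`. -/
noncomputable def Fmat (d : ℕ) [NeZero d] : Matrix (ZMod d) (ZMod d) ℂ :=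
  Matrix.of fun x y => ((1 / Real.sqrt d : ℝ) : ℂ) * wpow d (-(x * y))

/-- The flip (swap) operator `𝔽 = Σ_{r,s} |r,s⟩⟨s,r|`. -/
def FlipOp (d : ℕ) : Matrix (ZMod d × ZMod d) (ZMod d × ZMod d) ℂ :=
  Matrix.of fun p q => if p.1 = q.2 ∧ p.2 = q.1 then 1 else 0

set_option linter.unusedSectionVars false
set_option linter.unusedVariables false

variable (d : ℕ) [NeZero d]

lemma homg : IsPrimitiveRoot (omg d) d := Complex.isPrimitiveRoot_exp d (NeZero.ne d)

lemma omg_pow_d : omg d ^ d = 1 := (homg d).pow_eq_one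

lemma omg_pow_mod (n : ℕ) : omg d ^ (n % d) = omg d ^ n := by
  conv_rhs => rw [← Nat.div_add_mod n d]
  rw [pow_add, pow_mul, omg_pow_d, one_pow, one_mul]

lemma wpow_natCast (n : ℕ) : wpow d (n : ZMod d) = omg d ^ n := by
  rw [wpow, ZMod.val_natCast, omg_pow_mod]

lemma wpow_add (a b : ZMod d) : wpow d (a + b) = wpow d a * wpow d b := by
  have : a + b = ((a.val + b.val : ℕ) : ZMod d) := by push_cast [ZMod.natCast_val]; simp
  rw [this, wpow_natCast, pow_add, wpow, wpow]

lemma wpow_zero : wpow d 0 = 1 := by simp [wpow]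

lemma wpow_neg (a : ZMod d) : wpow d (-a) = (wpow d a)⁻¹ := by
  have h : wpow d a * wpow d (-a) = 1 := by rw [← wpow_add]; simp [wpow_zero]
  exact eq_inv_of_mul_eq_one_right (by rw [← wpow_add]; simp [wpow_zero])

lemma conj_omg : (starRingEnd ℂ) (omg d) = (omg d)⁻¹ := by
  rw [omg, ← Complex.exp_conj, ← Complex.exp_neg]
  congr 1
  simp [map_div₀, Complex.conj_I]
  ring_nf
  simp [Complex.conj_ofNat]
  ring

lemma conj_wpow (a : ZMod d) : (starRingEnd ℂ) (wpow d a) = wpow d (-a) := by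
  rw [wpow, map_pow, conj_omg, wpow_neg, wpow, inv_pow]

lemma wpow_eq_one_iff (a : ZMod d) : wpow d a = 1 ↔ a = 0 := by
  rw [wpow, (homg d).pow_eq_one_iff_dvd]
  constructor
  · intro h
    have h0 : a.val = 0 := Nat.eq_zero_of_dvd_of_lt h a.val_lt
    exact (ZMod.val_eq_zero a).mp h0
  · rintro rfl; simp

lemma sum_wpow (c : ZMod d) : ∑ x : ZMod d, wpow d (x * c) = if c = 0 then (d : ℂ) else 0 := by
  split_ifs with hc
  · subst hc; simp [wpow_zero, Finset.card_univ, ZMod.card]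
  · have hkey : wpow d c * ∑ x : ZMod d, wpow d (x * c) = ∑ x : ZMod d, wpow d (x * c) := by
      rw [Finset.mul_sum]
      refine Fintype.sum_equiv (Equiv.addRight 1) _ _ fun x => ?_
      rw [← wpow_add]
      congr 1
      simp [Equiv.coe_addRight]
      ring
    have h1 : (wpow d c - 1) * ∑ x : ZMod d, wpow d (x * c) = 0 := by
      rw [sub_mul, one_mul, hkey, sub_self]
    rcases mul_eq_zero.mp h1 with h | h
    · exact absurd ((wpow_eq_one_iff d c).mp (sub_eq_zero.mp h)) hc
    · exact h
lemma cconst_mul_self : (((1 / Real.sqrt d : ℝ) : ℂ)) * (((1 / Real.sqrt d : ℝ) : ℂ)) = 1 / (d : ℂ) := by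
  have h : Real.sqrt d * Real.sqrt d = d := Real.mul_self_sqrt (Nat.cast_nonneg d)
  rw [← Complex.ofReal_mul,
    show (1/Real.sqrt d)*(1/Real.sqrt d) = 1/(d:ℝ) by rw [div_mul_div_comm, one_mul, h]]
  push_cast
  ring

lemma Fmat_conjTranspose_mul_self : (Fmat d)ᴴ * Fmat d = 1 := by
  ext a b
  simp only [Matrix.mul_apply, Matrix.conjTranspose_apply, Fmat, Matrix.of_apply, _root_.map_mul, Complex.star_def,
    Complex.conj_ofReal, conj_wpow, neg_neg]
  have : ∀ x : ZMod d, ((1 / Real.sqrt d : ℝ) : ℂ) * wpow d (x * a) *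
      (((1 / Real.sqrt d : ℝ) : ℂ) * wpow d (-(x * b))) =
      (1 / (d : ℂ)) * wpow d (x * (a - b)) := by
    intro x
    rw [show x * (a - b) = x * a + -(x * b) by ring, wpow_add]
    rw [show ((1 / Real.sqrt d : ℝ) : ℂ) * wpow d (x * a) *
      (((1 / Real.sqrt d : ℝ) : ℂ) * wpow d (-(x * b))) =
      (((1 / Real.sqrt d : ℝ) : ℂ) * ((1 / Real.sqrt d : ℝ) : ℂ)) *
      (wpow d (x * a) * wpow d (-(x * b))) by ring, cconst_mul_self]
  rw [Finset.sum_congr rfl (fun x _ => this x), ← Finset.mul_sum, sum_wpow]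
  by_cases hab : a = b
  · subst hab
    have hne : (d:ℂ) ≠ 0 := Nat.cast_ne_zero.mpr (NeZero.ne d)
    simp [Matrix.one_apply, div_self hne]
  · simp [Matrix.one_apply, hab, sub_eq_zero]

lemma flip_mul_bellU : FlipOp d * BellU d = Matrix.of fun a q => BellU d (a.2, a.1) q := by
  ext a q
  rw [Matrix.mul_apply, Finset.sum_eq_single ((a.2, a.1) : ZMod d × ZMod d)]
  · simp [FlipOp]
  · intro b _ hb
    rw [show FlipOp d a b = 0 from if_neg (fun h => hb (Prod.ext h.2.symm h.1.symm)), zero_mul]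
  · intro h; exact absurd (Finset.mem_univ _) h

lemma lhs_entry (p q : ZMod d × ZMod d) :
    ((BellU d)ᴴ * FlipOp d * BellU d) p q =
      (1/(d:ℂ)) * (wpow d (p.1 * (q.2 - q.1)) * wpow d (-(q.1 * (p.2 - p.1)))) := by
  rw [Matrix.mul_assoc, flip_mul_bellU, Matrix.mul_apply]
  have hterm : ∀ a : ZMod d × ZMod d,
      (BellU d)ᴴ p a * (Matrix.of fun a q => BellU d (a.2, a.1) q) a q =
      OmegaVec d a.1 a.2 p * (starRingEnd ℂ) (OmegaVec d a.2 a.1 q) := by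
    intro a
    simp [Matrix.conjTranspose_apply, BellU]
  rw [Finset.sum_congr rfl (fun a _ => hterm a),
    Finset.sum_eq_single ((q.2 - q.1, p.2 - p.1) : ZMod d × ZMod d)]
  · simp only [OmegaVec, Weyl, Matrix.of_apply]
    rw [if_pos (by ring), if_pos (by ring)]
    rw [_root_.map_mul, Complex.conj_ofReal, conj_wpow]
    rw [show ((1 / Real.sqrt d : ℝ) : ℂ) * wpow d (p.1 * (q.2 - q.1)) *
      (((1 / Real.sqrt d : ℝ) : ℂ) * wpow d (-(q.1 * (p.2 - p.1)))) =
      (((1 / Real.sqrt d : ℝ) : ℂ) * ((1 / Real.sqrt d : ℝ) : ℂ)) *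
      (wpow d (p.1 * (q.2 - q.1)) * wpow d (-(q.1 * (p.2 - p.1)))) by ring, cconst_mul_self]
  · intro a _ ha
    by_cases h1 : p.2 = p.1 + a.2
    · by_cases h2 : q.2 = q.1 + a.1
      · exact absurd (Prod.ext (by rw [h2]; ring) (by rw [h1]; ring)) ha
      · simp [OmegaVec, Weyl, h2]
    · simp [OmegaVec, Weyl, h1]
  · intro h; exact absurd (Finset.mem_univ _) h

lemma rhs_entry (p q : ZMod d × ZMod d) :
    (((Fmat d)ᴴ ⊗ₖ Fmat d) * FlipOp d) p q =
      (1/(d:ℂ)) * (wpow d (q.2 * p.1) * wpow d (-(p.2 * q.1))) := by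
  rw [Matrix.mul_apply, Finset.sum_eq_single ((q.2, q.1) : ZMod d × ZMod d)]
  · rw [show FlipOp d (q.2, q.1) q = 1 from if_pos ⟨rfl, rfl⟩, mul_one]
    obtain ⟨p1, p2⟩ := p
    simp only [Matrix.kroneckerMap_apply, Matrix.conjTranspose_apply, Fmat, Matrix.of_apply]
    rw [Complex.star_def, _root_.map_mul, Complex.conj_ofReal, conj_wpow, neg_neg]
    rw [show ((1 / Real.sqrt d : ℝ) : ℂ) * wpow d (q.2 * p1) *
      (((1 / Real.sqrt d : ℝ) : ℂ) * wpow d (-(p2 * q.1))) =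
      (((1 / Real.sqrt d : ℝ) : ℂ) * ((1 / Real.sqrt d : ℝ) : ℂ)) *
      (wpow d (q.2 * p1) * wpow d (-(p2 * q.1))) by ring, cconst_mul_self]
  · intro b _ hb
    rw [show FlipOp d b q = 0 from if_neg (fun h => hb (Prod.ext h.1 h.2)), mul_zero]
  · intro h; exact absurd (Finset.mem_univ _) h

lemma part1 : (BellU d)ᴴ * FlipOp d * BellU d = ((Fmat d)ᴴ ⊗ₖ Fmat d) * FlipOp d := by
  ext p q
  rw [lhs_entry, rhs_entry, ← wpow_add, ← wpow_add]
  congr 2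
  ring

lemma mulvec_form (φ : ZMod d × ZMod d → ℂ) :
    (Matrix.of fun i j : ZMod d => ((((Fmat d)ᴴ ⊗ₖ Fmat d) * FlipOp d) *ᵥ φ) (i, j)) =
    (Fmat d)ᴴ * (Matrix.of fun i j : ZMod d => φ (i, j))ᵀ * (Fmat d)ᵀ := by
  ext i j
  rw [Matrix.of_apply, Matrix.mulVec, dotProduct, Fintype.sum_prod_type]
  rw [Matrix.mul_apply]
  have hR : ∀ b : ZMod d, ((Fmat d)ᴴ * (Matrix.of fun i j : ZMod d => φ (i, j))ᵀ) i b *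
      (Fmat d)ᵀ b j = ∑ a : ZMod d,
        ((1/(d:ℂ)) * (wpow d (a * i) * wpow d (-(j * b)))) * φ (b, a) := by
    intro b
    rw [Matrix.mul_apply, Finset.sum_mul]
    refine Finset.sum_congr rfl fun a _ => ?_
    simp only [Matrix.conjTranspose_apply, Matrix.transpose_apply, Matrix.of_apply, Fmat,
      Complex.star_def, _root_.map_mul, Complex.conj_ofReal, conj_wpow, neg_neg]
    rw [show ((1 / Real.sqrt d : ℝ) : ℂ) * wpow d (a * i) * φ (b, a) *
      (((1 / Real.sqrt d : ℝ) : ℂ) * wpow d (-(j * b))) =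
      (((1 / Real.sqrt d : ℝ) : ℂ) * ((1 / Real.sqrt d : ℝ) : ℂ)) *
      (wpow d (a * i) * wpow d (-(j * b))) * φ (b, a) by ring, cconst_mul_self]
  rw [Finset.sum_congr rfl (fun b _ => hR b)]
  refine Finset.sum_congr rfl fun s _ => Finset.sum_congr rfl fun r _ => ?_
  rw [rhs_entry]

lemma F_det_unit : IsUnit (Fmat d).det :=
  IsUnit.of_mul_eq_one ((Fmat d)ᴴ).det
    (by rw [mul_comm, ← Matrix.det_mul, Fmat_conjTranspose_mul_self, Matrix.det_one])

lemma FH_det_unit : IsUnit ((Fmat d)ᴴ).det :=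
  IsUnit.of_mul_eq_one (Fmat d).det
    (by rw [← Matrix.det_mul, Fmat_conjTranspose_mul_self, Matrix.det_one])


/-- `U^† 𝔽 U = (F^† ⊗ F) 𝔽`; in particular, applying `U^† 𝔽 U` to a vector preserves the
rank of its coefficient matrix (its Schmidt rank). -/
theorem stmt15 (d : ℕ) [NeZero d] (hd : 2 ≤ d) :
    (BellU d)ᴴ * FlipOp d * BellU d = ((Fmat d)ᴴ ⊗ₖ Fmat d) * FlipOp d ∧
    ∀ φ : ZMod d × ZMod d → ℂ,
      (Matrix.of fun i j : ZMod d =>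
        (((BellU d)ᴴ * FlipOp d * BellU d) *ᵥ φ) (i, j)).rank =
      (Matrix.of fun i j : ZMod d => φ (i, j)).rank := by
  refine ⟨part1 d, fun φ => ?_⟩
  rw [part1 d, mulvec_form d φ,
    Matrix.rank_mul_eq_left_of_isUnit_det _ _ (by rw [Matrix.det_transpose]; exact F_det_unit d),
    Matrix.rank_mul_eq_right_of_isUnit_det _ _ (FH_det_unit d),
    Matrix.rank_transpose]
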